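/- For all natural numbers m and n, the tensor product of sl2-crystals B(m) ⊗ B(n) decomposes as a disjoint union of irreducible crystals: B(m) ⊗ B(n) ≅ ⨆_{k=0}^{min(m,n)} B(m+n−2k). -/

import Mathlib

/-- `x^i y^j` is represented as `(i, j) : ℕ × ℕ`, an element of the sl2-crystal `B(i+j)`. -/
def et (p : ℕ × ℕ) : Option (ℕ × ℕ) := if p.1 = 0 then none else some (p.1 - 1, p.2 + 1)
def ft (p : ℕ × ℕ) : Option (ℕ × ℕ) := if p.2 = 0 then none else some (p.1 + 1, p.2 - 1)
def eps (p : ℕ × ℕ) : ℤ := p.1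
def phi (p : ℕ × ℕ) : ℤ := p.2
def wt (p : ℕ × ℕ) : ℤ := (p.2 : ℤ) - (p.1 : ℤ)

/-- Kashiwara tensor product rule for `ẽ` on a pair of elements. -/
def etT (b : (ℕ × ℕ) × (ℕ × ℕ)) : Option ((ℕ × ℕ) × (ℕ × ℕ)) :=
  if eps b.2 ≤ phi b.1 then (et b.1).map (fun a => (a, b.2)) else (et b.2).map (fun a => (b.1, a))

/-- Kashiwara tensor product rule for `f̃` on a pair of elements. -/
def ftT (b : (ℕ × ℕ) × (ℕ × ℕ)) : Option ((ℕ × ℕ) × (ℕ × ℕ)) :=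
  if eps b.2 < phi b.1 then (ft b.1).map (fun a => (a, b.2)) else (ft b.2).map (fun a => (b.1, a))

def epsT (b : (ℕ × ℕ) × (ℕ × ℕ)) : ℤ := max (eps b.1) (eps b.2 - wt b.1)
def phiT (b : (ℕ × ℕ) × (ℕ × ℕ)) : ℤ := max (phi b.1 + wt b.2) (phi b.2)
def wtT (b : (ℕ × ℕ) × (ℕ × ℕ)) : ℤ := wt b.1 + wt b.2

/-- Iterated application of a pointed (partial) operator. -/
def iterOp {α : Type} (g : α → Option α) : ℕ → α → Option α
  | 0, a => some a
  | n + 1, a => (g a).bind (iterOp g n)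

/-- The underlying set of the sl2-crystal `B(n)`: monomials `x^i y^j` with `i + j = n`. -/
def Bel (n : ℕ) : Type := {p : ℕ × ℕ // p.1 + p.2 = n}

def etB {n : ℕ} (b : Bel n) : Option (Bel n) :=
  if h : b.val.1 = 0 then none
  else some ⟨(b.val.1 - 1, b.val.2 + 1), by have := b.2; omega⟩

def ftB {n : ℕ} (b : Bel n) : Option (Bel n) :=
  if h : b.val.2 = 0 then none
  else some ⟨(b.val.1 + 1, b.val.2 - 1), by have := b.2; omega⟩

/-- The tensor product crystal `B(m) ⊗ B(n)`. -/
def TP (m n : ℕ) : Type := Bel m × Bel n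

def etTP {m n : ℕ} (b : TP m n) : Option (TP m n) :=
  if eps b.2.val ≤ phi b.1.val then (etB b.1).map (fun a => (a, b.2))
  else (etB b.2).map (fun a => (b.1, a))

def ftTP {m n : ℕ} (b : TP m n) : Option (TP m n) :=
  if eps b.2.val < phi b.1.val then (ftB b.1).map (fun a => (a, b.2))
  else (ftB b.2).map (fun a => (b.1, a))

/-- The disjoint union `⨆_{k=0}^{min(m,n)} B(m+n-2k)`. -/
def CG (m n : ℕ) : Type := Σ k : Fin (min m n + 1), Bel (m + n - 2 * (k : ℕ))

def etCG {m n : ℕ} (b : CG m n) : Option (CG m n) := (etB b.2).map (fun a => ⟨b.1, a⟩)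
def ftCG {m n : ℕ} (b : CG m n) : Option (CG m n) := (ftB b.2).map (fun a => ⟨b.1, a⟩)

/-- Clebsch–Gordan for sl2 crystals.  For all `m n : ℕ` there is an
isomorphism of crystals `B(m) ⊗ B(n) ≅ ⨆_{k=0}^{min(m,n)} B(m+n−2k)`: a bijection of the
underlying (nonzero) elements commuting with the Kashiwara operators `ẽ`, `f̃` and
preserving `wt`, `ε` and `φ`. -/

lemma CG_ext {m n : ℕ} {c c' : CG m n} (h1 : (c.1 : ℕ) = (c'.1 : ℕ))
    (h2 : c.2.val = c'.2.val) : c = c' := by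
  obtain ⟨⟨k, hk⟩, ⟨v, hv⟩⟩ := c
  obtain ⟨⟨k', hk'⟩, ⟨v', hv'⟩⟩ := c'
  simp only at h1 h2
  subst h1; subst h2; rfl

lemma TP_ext {m n : ℕ} {b b' : TP m n} (h1 : b.1.val = b'.1.val)
    (h2 : b.2.val = b'.2.val) : b = b' :=
  Prod.ext (Subtype.ext h1) (Subtype.ext h2)

def toCG (m n : ℕ) (b : TP m n) : CG m n :=
  ⟨⟨min b.1.val.2 b.2.val.1, by have h1 := b.1.2; have h2 := b.2.2; omega⟩,
   ⟨(b.1.val.1 + b.2.val.1 - min b.1.val.2 b.2.val.1,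
     b.1.val.2 + b.2.val.2 - min b.1.val.2 b.2.val.1), by
      have h1 := b.1.2; have h2 := b.2.2; simp only; omega⟩⟩

def toTP (m n : ℕ) (c : CG m n) : TP m n :=
  if h : c.2.val.1 ≤ m - (c.1 : ℕ) then
    (⟨(c.2.val.1, m - c.2.val.1), by have hk := c.1.isLt; omega⟩,
     ⟨((c.1 : ℕ), n - (c.1 : ℕ)), by have hk := c.1.isLt; omega⟩)
  else
    (⟨(m - (c.1 : ℕ), (c.1 : ℕ)), by have hk := c.1.isLt; omega⟩,
     ⟨(c.2.val.1 + 2 * (c.1 : ℕ) - m, c.2.val.2), by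
        have hk := c.1.isLt; have hv := c.2.2; omega⟩)

lemma li (m n : ℕ) : Function.LeftInverse (toTP m n) (toCG m n) := by
  intro b
  obtain ⟨⟨⟨i1, j1⟩, h1⟩, ⟨⟨i2, j2⟩, h2⟩⟩ := b
  apply TP_ext <;>
  · simp only [toCG, toTP, Fin.val_mk]
    split_ifs with h <;> simp only [h, ↓reduceDIte, Prod.mk.injEq] <;> constructor <;> omega

lemma ri (m n : ℕ) : Function.RightInverse (toTP m n) (toCG m n) := by
  intro c
  obtain ⟨⟨k, hk⟩, ⟨⟨a, b⟩, hv⟩⟩ := c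
  simp only [Fin.val_mk] at hv
  apply CG_ext <;>
  · simp only [toCG, toTP, Fin.val_mk]
    split_ifs with h <;> simp only [h, ↓reduceDIte] <;>
      first
        | omega
        | (simp only [Prod.mk.injEq]; constructor <;> omega)

def eqv (m n : ℕ) : TP m n ≃ CG m n := ⟨toCG m n, toTP m n, li m n, ri m n⟩

lemma eqv_et (m n : ℕ) (b : TP m n) :
    Option.map (eqv m n) (etTP b) = etCG (eqv m n b) := by
  obtain ⟨⟨⟨i1, j1⟩, h1⟩, ⟨⟨i2, j2⟩, h2⟩⟩ := b
  show Option.map (toCG m n) _ = _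
  simp only [etTP, etCG, etB, toCG, eps, phi, eqv, Equiv.coe_fn_mk, Fin.val_mk]
  split_ifs <;>
    simp only [*, ↓reduceDIte, ↓reduceIte, Option.map_some, Option.map_none] <;> dsimp -failIfUnchanged only <;>
    first
      | omega
      | rfl
      | (rw [dif_pos (by omega)]; rfl)
      | (refine congrArg some (CG_ext ?_ ?_) <;>
          simp only [toCG, Fin.val_mk] <;>
          first
            | omega
            | (simp only [Prod.mk.injEq]; constructor <;> omega))

lemma eqv_ft (m n : ℕ) (b : TP m n) :
    Option.map (eqv m n) (ftTP b) = ftCG (eqv m n b) := by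
  obtain ⟨⟨⟨i1, j1⟩, h1⟩, ⟨⟨i2, j2⟩, h2⟩⟩ := b
  show Option.map (toCG m n) _ = _
  simp only [ftTP, ftCG, ftB, toCG, eps, phi, eqv, Equiv.coe_fn_mk, Fin.val_mk]
  split_ifs <;>
    simp only [*, ↓reduceDIte, ↓reduceIte, Option.map_some, Option.map_none] <;> dsimp -failIfUnchanged only <;>
    first
      | omega
      | rfl
      | (rw [dif_pos (by omega)]; rfl)
      | (refine congrArg some (CG_ext ?_ ?_) <;>
          simp only [toCG, Fin.val_mk] <;>
          first
            | omega
            | (simp only [Prod.mk.injEq]; constructor <;> omega))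

theorem stmt0 (m n : ℕ) :
    ∃ e : TP m n ≃ CG m n,
      (∀ b : TP m n, Option.map e (etTP b) = etCG (e b)) ∧
      (∀ b : TP m n, Option.map e (ftTP b) = ftCG (e b)) ∧
      (∀ b : TP m n, wtT (b.1.val, b.2.val) = wt (e b).2.val) ∧
      (∀ b : TP m n, epsT (b.1.val, b.2.val) = eps (e b).2.val) ∧
      (∀ b : TP m n, phiT (b.1.val, b.2.val) = phi (e b).2.val) := by
  refine ⟨eqv m n, eqv_et m n, eqv_ft m n, ?_, ?_, ?_⟩ <;>
  · intro b
    obtain ⟨⟨⟨i1, j1⟩, h1⟩, ⟨⟨i2, j2⟩, h2⟩⟩ := b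
    show _ = _
    simp only [wtT, epsT, phiT, wt, eps, phi, toCG, eqv, Equiv.coe_fn_mk, Fin.val_mk]
    omega
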